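/- arXiv:1502.04940 — 3 statements merged into one kernel-verified Lean document; each statement's English description precedes it below -/
import Mathlib

section
/- Let x* ∈ ℝ, φ* ∈ ℝ, φ'' > 0, a > 0, and σ > 0. Let v be a random variable with distribution N(0, σ²) and W a bounded random variable independent of v with E[W] = 0. For x̃ ∈ ℝ, the expectation E[ sin(v) · (φ* + (φ''/2)(x̃ + a sin(v))² + W) ] equals (a φ''(1 - e^{-2σ²})/2) · x̃. -/
open MeasureTheory ProbabilityTheory

section Aux

open Complex Real
open scoped NNReal ENNReal

lemma aux_bdd_int {Ω : Type*} [MeasurableSpace Ω] {μ : Measure Ω} [IsFiniteMeasure μ] {f : Ω → ℝ}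
    (hf : AEStronglyMeasurable f μ) {C : ℝ} (h : ∀ ω, |f ω| ≤ C) : Integrable f μ :=
  (integrable_const C).mono' hf (ae_of_all _ (by simpa [Real.norm_eq_abs] using h))

lemma aux_gauss_neg (v : ℝ≥0) :
    (gaussianReal 0 v).map (fun x : ℝ => -x) = gaussianReal 0 v := by
  have h1 : (⟨(-1 : ℝ) ^ 2, sq_nonneg _⟩ : ℝ≥0) = 1 := by ext; norm_num
  have := gaussianReal_map_const_mul (μ := 0) (v := v) (-1)
  simpa [h1, neg_one_mul] using this

lemma aux_odd_gauss (v : ℝ≥0) (f : ℝ → ℝ) (hf : Measurable f)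
    (hodd : ∀ x, f (-x) = -f x) :
    ∫ x, f x ∂(gaussianReal 0 v) = 0 := by
  have h : ∫ x, f x ∂(gaussianReal 0 v) = ∫ x, f (-x) ∂(gaussianReal 0 v) := by
    conv_lhs => rw [← aux_gauss_neg v]
    rw [integral_map (by fun_prop) hf.aestronglyMeasurable]
  simp_rw [hodd, integral_neg] at h
  linarith

lemma aux_integral_gauss_pdf (σ : ℝ) (hσ : 0 < σ) (g : ℝ → ℝ) :
    ∫ x, g x ∂(gaussianReal 0 ⟨σ ^ 2, sq_nonneg σ⟩) =
      ∫ x, gaussianPDFReal 0 ⟨σ ^ 2, sq_nonneg σ⟩ x * g x := by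
  have hv : (⟨σ ^ 2, sq_nonneg σ⟩ : ℝ≥0) ≠ 0 := by
    intro h
    have h' : ((⟨σ ^ 2, sq_nonneg σ⟩ : ℝ≥0) : ℝ) = ((0 : ℝ≥0) : ℝ) := by rw [h]; rfl
    simp only [NNReal.coe_mk, NNReal.coe_zero] at h'
    nlinarith
  rw [gaussianReal_of_var_ne_zero _ hv]
  have hd : gaussianPDF 0 (⟨σ ^ 2, sq_nonneg σ⟩ : ℝ≥0) =
      fun x => ((Real.toNNReal (gaussianPDFReal 0 ⟨σ ^ 2, sq_nonneg σ⟩ x) : ℝ≥0) : ℝ≥0∞) :=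
    rfl
  erw [hd, integral_withDensity_eq_integral_smul
    ((measurable_gaussianPDFReal _ _).real_toNNReal) g]
  congr 1
  ext x
  erw [NNReal.smul_def, smul_eq_mul, Real.coe_toNNReal _ (gaussianPDFReal_nonneg _ _ _)]

lemma aux_real_cos_integral (σ : ℝ) (hσ : 0 < σ) :
    ∫ x : ℝ, Real.exp (-x ^ 2 / (2 * σ ^ 2)) * Real.cos (2 * x)
      = Real.sqrt (2 * π * σ ^ 2) * Real.exp (-2 * σ ^ 2) := by
  set b : ℂ := ((1 / (2 * σ ^ 2) : ℝ) : ℂ) with hbdef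
  have hσ2 : (0 : ℝ) < 2 * σ ^ 2 := by positivity
  have hb : 0 < b.re := by
    rw [hbdef, Complex.ofReal_re]
    positivity
  have hbne : (2 * σ ^ 2 : ℂ) ≠ 0 := by
    exact_mod_cast (ne_of_gt hσ2)
  have key := fourierIntegral_gaussian hb (2 : ℂ)
  have hpt : ∀ x : ℝ, Complex.exp (Complex.I * 2 * x) * Complex.exp (-b * x ^ 2)
      = ((Real.exp (-x ^ 2 / (2 * σ ^ 2)) : ℝ) : ℂ) * Complex.exp ((2 * x : ℝ) * Complex.I) := by
    intro x
    rw [Complex.ofReal_exp, ← Complex.exp_add, ← Complex.exp_add]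
    congr 1
    rw [hbdef]
    push_cast
    field_simp
    ring
  have hint : Integrable (fun x : ℝ => Complex.exp (Complex.I * 2 * x) *
      Complex.exp (-b * x ^ 2)) := by
    refine (integrable_cexp_quadratic hb (2 * Complex.I) 0).congr (ae_of_all _ fun x => ?_)
    show Complex.exp (-b * x ^ 2 + 2 * Complex.I * x + 0)
        = Complex.exp (Complex.I * 2 * x) * Complex.exp (-b * x ^ 2)
    rw [← Complex.exp_add]
    congr 1
    ring
  have hL : ∫ x : ℝ, Real.exp (-x ^ 2 / (2 * σ ^ 2)) * Real.cos (2 * x)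
      = (∫ x : ℝ, Complex.exp (Complex.I * 2 * x) * Complex.exp (-b * x ^ 2)).re := by
    have h := integral_re hint
    simp only [RCLike.re_to_complex] at h
    rw [← h]
    congr 1
    ext x
    rw [hpt x, Complex.re_ofReal_mul, Complex.exp_ofReal_mul_I_re]
  have hσc : (σ : ℂ) ≠ 0 := Complex.ofReal_ne_zero.mpr hσ.ne'
  have h2 : (↑π : ℂ) / b = ((2 * π * σ ^ 2 : ℝ) : ℂ) := by
    rw [hbdef]
    push_cast
    field_simp
  have h3 : -(2 : ℂ) ^ 2 / (4 * b) = ((-2 * σ ^ 2 : ℝ) : ℂ) := by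
    rw [hbdef]
    push_cast
    field_simp
    ring
  have hR : ((↑π : ℂ) / b) ^ (1 / 2 : ℂ) * Complex.exp (-(2 : ℂ) ^ 2 / (4 * b))
      = ((Real.sqrt (2 * π * σ ^ 2) * Real.exp (-2 * σ ^ 2) : ℝ) : ℂ) := by
    rw [h2, h3, ← Complex.ofReal_exp,
      show ((1 : ℂ) / 2) = ((1 / 2 : ℝ) : ℂ) by norm_num,
      ← Complex.ofReal_cpow (by positivity), ← Complex.ofReal_mul, Real.sqrt_eq_rpow]
  rw [hL, key, hR, Complex.ofReal_re]

lemma aux_cos_gauss (σ : ℝ) (hσ : 0 < σ) :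
    ∫ x, Real.cos (2 * x) ∂(gaussianReal 0 ⟨σ ^ 2, sq_nonneg σ⟩)
      = Real.exp (-2 * σ ^ 2) := by
  rw [aux_integral_gauss_pdf σ hσ]
  have hs : (0 : ℝ) < Real.sqrt (2 * π * σ ^ 2) := by
    apply Real.sqrt_pos.mpr
    positivity
  have hpdf : ∀ x : ℝ, gaussianPDFReal 0 (⟨σ ^ 2, sq_nonneg σ⟩ : ℝ≥0) x * Real.cos (2 * x)
      = (Real.sqrt (2 * π * σ ^ 2))⁻¹ * (Real.exp (-x ^ 2 / (2 * σ ^ 2)) * Real.cos (2 * x)) := by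
    intro x
    simp only [gaussianPDFReal, NNReal.coe_mk, sub_zero]
    change (Real.sqrt (2 * π * σ ^ 2))⁻¹ * Real.exp (-x ^ 2 / (2 * σ ^ 2)) * Real.cos (2 * x) = _
    ring
  simp_rw [hpdf]
  rw [integral_const_mul, aux_real_cos_integral σ hσ, ← mul_assoc,
    inv_mul_cancel₀ (ne_of_gt hs), one_mul]

lemma aux_sin_sq_gauss (σ : ℝ) (hσ : 0 < σ) :
    ∫ x, Real.sin x ^ 2 ∂(gaussianReal 0 ⟨σ ^ 2, sq_nonneg σ⟩)
      = (1 - Real.exp (-2 * σ ^ 2)) / 2 := by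
  have hpt : ∀ x : ℝ, Real.sin x ^ 2 = 1 / 2 - Real.cos (2 * x) / 2 := by
    intro x
    have h1 := Real.sin_sq_add_cos_sq x
    have h2 := Real.cos_two_mul x
    linarith
  simp_rw [hpt]
  haveI := instIsProbabilityMeasureGaussianReal 0 ⟨σ ^ 2, sq_nonneg σ⟩
  have hcint : Integrable (fun x : ℝ => Real.cos (2 * x))
      (gaussianReal 0 ⟨σ ^ 2, sq_nonneg σ⟩) :=
    aux_bdd_int ((Real.continuous_cos.comp (continuous_const.mul continuous_id)).measurable
      |>.aestronglyMeasurable) (fun x => Real.abs_cos_le_one _)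
  rw [integral_sub (integrable_const _) (hcint.div_const 2)]
  simp_rw [div_eq_mul_inv (Real.cos _), integral_mul_const]
  rw [integral_const, aux_cos_gauss σ hσ]
  simp
  ring

end Aux

theorem averaged_drift_static_map
    {Ω : Type*} [MeasureSpace Ω] [IsProbabilityMeasure (ℙ : Measure Ω)]
    (xstar φstar φ'' a σ : ℝ) (hφ : 0 < φ'') (ha : 0 < a) (hσ : 0 < σ)
    (v W : Ω → ℝ) (hvmeas : Measurable v) (hWmeas : Measurable W)
    (hv : Measure.map v ℙ = gaussianReal 0 ⟨σ ^ 2, sq_nonneg σ⟩)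
    (hWbdd : ∃ M : ℝ, ∀ ω : Ω, |W ω| ≤ M)
    (hindep : IndepFun v W ℙ)
    (hWmean : ∫ ω, W ω = 0)
    (xt : ℝ) :
    ∫ ω, Real.sin (v ω) * (φstar + φ'' / 2 * (xt + a * Real.sin (v ω)) ^ 2 + W ω)
      = a * φ'' * (1 - Real.exp (-2 * σ ^ 2)) / 2 * xt := by
  obtain ⟨M, hM⟩ := hWbdd
  set s : Ω → ℝ := fun ω => Real.sin (v ω) with hsdef
  have hsmeas : Measurable s := Real.measurable_sin.comp hvmeas
  have habs : ∀ ω, |s ω| ≤ 1 := fun ω => Real.abs_sin_le_one _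
  have I1 : Integrable s ℙ := aux_bdd_int hsmeas.aestronglyMeasurable habs
  have I2 : Integrable (fun ω => s ω ^ 2) ℙ :=
    aux_bdd_int ((hsmeas.pow_const 2).aestronglyMeasurable)
      (fun ω => by rw [abs_pow]; exact pow_le_one₀ (abs_nonneg _) (habs ω))
  have I3 : Integrable (fun ω => s ω ^ 3) ℙ :=
    aux_bdd_int ((hsmeas.pow_const 3).aestronglyMeasurable)
      (fun ω => by rw [abs_pow]; exact pow_le_one₀ (abs_nonneg _) (habs ω))
  have IW : Integrable W ℙ := aux_bdd_int hWmeas.aestronglyMeasurable hM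
  have ISW : Integrable (fun ω => s ω * W ω) ℙ :=
    aux_bdd_int ((hsmeas.mul hWmeas).aestronglyMeasurable)
      (fun ω => by
        rw [abs_mul]
        exact le_trans (mul_le_of_le_one_left (abs_nonneg _) (habs ω)) (hM ω))
  have E1 : ∫ ω, s ω = 0 := by
    rw [hsdef]
    rw [← integral_map hvmeas.aemeasurable
      Real.continuous_sin.measurable.aestronglyMeasurable, hv]
    exact aux_odd_gauss _ _ Real.measurable_sin (fun x => Real.sin_neg x)
  have E2 : ∫ ω, s ω ^ 2 = (1 - Real.exp (-2 * σ ^ 2)) / 2 := by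
    rw [hsdef]
    have : ∫ ω, Real.sin (v ω) ^ 2 = ∫ x, Real.sin x ^ 2 ∂(Measure.map v ℙ) :=
      (integral_map hvmeas.aemeasurable
        ((Real.continuous_sin.pow 2).measurable.aestronglyMeasurable)).symm
    rw [this, hv]
    exact aux_sin_sq_gauss σ hσ
  have E3 : ∫ ω, s ω ^ 3 = 0 := by
    rw [hsdef]
    have : ∫ ω, Real.sin (v ω) ^ 3 = ∫ x, Real.sin x ^ 3 ∂(Measure.map v ℙ) :=
      (integral_map hvmeas.aemeasurable
        ((Real.continuous_sin.pow 3).measurable.aestronglyMeasurable)).symm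
    rw [this, hv]
    exact aux_odd_gauss _ _ (Real.measurable_sin.pow_const 3)
      (fun x => by rw [Real.sin_neg]; ring)
  have EW : ∫ ω, s ω * W ω = 0 := by
    have hI : IndepFun s W ℙ := by
      have := hindep.comp Real.measurable_sin measurable_id
      exact this
    have := hI.integral_mul_eq_mul_integral I1.aestronglyMeasurable IW.aestronglyMeasurable
    have heq : ∫ ω, s ω * W ω = (∫ ω, s ω) * ∫ ω, W ω := this
    rw [heq, hWmean, mul_zero]
  have hexpand : ∀ ω, Real.sin (v ω) * (φstar + φ'' / 2 * (xt + a * Real.sin (v ω)) ^ 2 + W ω)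
      = (φstar + φ'' / 2 * xt ^ 2) * s ω + φ'' * a * xt * s ω ^ 2
        + φ'' / 2 * a ^ 2 * s ω ^ 3 + s ω * W ω := by
    intro ω
    simp only [hsdef]
    ring
  have J1 : Integrable (fun ω => (φstar + φ'' / 2 * xt ^ 2) * s ω) ℙ := I1.const_mul _
  have J2 : Integrable (fun ω => φ'' * a * xt * s ω ^ 2) ℙ := I2.const_mul _
  have J3 : Integrable (fun ω => φ'' / 2 * a ^ 2 * s ω ^ 3) ℙ := I3.const_mul _
  have J12 : Integrable (fun ω => (φstar + φ'' / 2 * xt ^ 2) * s ω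
      + φ'' * a * xt * s ω ^ 2) ℙ := J1.add J2
  have J123 : Integrable (fun ω => (φstar + φ'' / 2 * xt ^ 2) * s ω
      + φ'' * a * xt * s ω ^ 2 + φ'' / 2 * a ^ 2 * s ω ^ 3) ℙ := J12.add J3
  rw [integral_congr_ae (ae_of_all _ hexpand)]
  rw [integral_add J123 ISW, integral_add J12 J3, integral_add J1 J2,
    integral_const_mul, integral_const_mul, integral_const_mul, E1, E2, E3, EW]
  ring
end

section
/- Let ς : ℝ → ℝ be C³ with ς(0) = 0, ς'(0) = 0, ς''(0) < 0, let a > 0 and σ > 0, and let v ~ N(0, σ²). Define G(θ) = E[ς(θ + a sin(v)) sin(v)]. Then G'(0) = a·ς''(0)·(1 - e^{-2σ²})/2 + O(a²) as a → 0; in particular, for sufficiently small a, G'(0) < 0. -/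
open MeasureTheory ProbabilityTheory Filter Asymptotics Real

lemma re_helper (A B C : ℝ) : ((A:ℂ) * ((B:ℂ) + (C:ℂ)*Complex.I)).re = A*B := by simp

lemma gauss_integral (σ : ℝ) (hσ : 0 < σ) (f : ℝ → ℝ) :
    ∫ y, f y ∂(gaussianReal 0 ⟨σ ^ 2, sq_nonneg σ⟩)
      = ∫ y, gaussianPDFReal 0 ⟨σ ^ 2, sq_nonneg σ⟩ y * f y := by
  set v : NNReal := ⟨σ ^ 2, sq_nonneg σ⟩ with hv
  have hv0 : v ≠ 0 := by
    simp only [ne_eq, ← NNReal.coe_eq_zero, NNReal.coe_mk, hv]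
    exact fun h => (pow_pos hσ 2).ne' (congrArg NNReal.toReal h)
  rw [gaussianReal_of_var_ne_zero 0 hv0,
    show (volume.withDensity (gaussianPDF 0 v))
      = volume.withDensity (fun x => ((gaussianPDFReal 0 v x).toNNReal : ENNReal)) from rfl,
    integral_withDensity_eq_integral_smul
      ((measurable_gaussianPDFReal 0 v).real_toNNReal) f]
  simp only [NNReal.smul_def, smul_eq_mul,
    Real.coe_toNNReal _ (gaussianPDFReal_nonneg 0 v _)]

lemma gauss_cos (σ : ℝ) (hσ : 0 < σ) :
    ∫ y, Real.cos (2*y) ∂(gaussianReal 0 ⟨σ ^ 2, sq_nonneg σ⟩) = Real.exp (-2*σ^2) := by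
  rw [gauss_integral σ hσ]
  have hb : ((-(1/(2*σ^2) : ℝ) : ℂ)).re < 0 := by
    simp only [Complex.neg_re, Complex.ofReal_re]
    have : (0:ℝ) < 1/(2*σ^2) := by positivity
    linarith
  have hint := integrable_cexp_quadratic' hb (2*Complex.I) 0
  have hI := integral_cexp_quadratic hb (2*Complex.I) 0
  have hre : ∀ y : ℝ, (Complex.exp ((-(1/(2*σ^2) : ℝ) : ℂ) * y^2 + (2*Complex.I)*y + 0)).re
      = Real.exp (-(1/(2*σ^2)) * y^2) * Real.cos (2*y) := by
    intro y
    rw [add_zero, Complex.exp_add]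
    have h1 : ((-(1/(2*σ^2) : ℝ) : ℂ) * (y:ℂ)^2) = ((-(1/(2*σ^2)) * y^2 : ℝ) : ℂ) := by
      push_cast; ring
    have h2 : (2*Complex.I)*(y:ℂ) = ((2*y : ℝ):ℂ)*Complex.I := by push_cast; ring
    rw [h1, h2, Complex.exp_mul_I, ← Complex.ofReal_exp, ← Complex.ofReal_cos,
      ← Complex.ofReal_sin, re_helper]
  -- RHS of hI
  have hRHS : ((π : ℂ) / -((-(1/(2*σ^2) : ℝ) : ℂ))) ^ (1/2 : ℂ)
      * Complex.exp (0 - (2*Complex.I)^2 / (4 * ((-(1/(2*σ^2) : ℝ) : ℂ))))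
      = ((Real.sqrt (2*π*σ^2) * Real.exp (-2*σ^2) : ℝ) : ℂ) := by
    have hσ2 : (σ:ℂ)^2 ≠ 0 := by
      norm_cast; positivity
    have e1 : ((π : ℂ) / -((-(1/(2*σ^2) : ℝ) : ℂ))) = ((2*π*σ^2 : ℝ) : ℂ) := by
      push_cast
      field_simp
    have e2 : (0 - (2*Complex.I)^2 / (4 * ((-(1/(2*σ^2) : ℝ) : ℂ)))) = ((-2*σ^2 : ℝ) : ℂ) := by
      have h4 : (2*Complex.I)^2 = -4 := by
        rw [mul_pow, Complex.I_sq]; norm_num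
      rw [h4]
      push_cast
      field_simp
      ring
    rw [e1, e2, ← Complex.ofReal_exp]
    have h12 : (1/2 : ℂ) = ((1/2 : ℝ) : ℂ) := by norm_num
    rw [h12, ← Complex.ofReal_cpow (by positivity) (1/2 : ℝ), ← Complex.ofReal_mul]
    congr 2
    rw [Real.sqrt_eq_rpow]
  have hL : ∫ y : ℝ, Real.exp (-(1/(2*σ^2)) * y^2) * Real.cos (2*y)
      = Real.sqrt (2*π*σ^2) * Real.exp (-2*σ^2) := by
    have := integral_re hint
    rw [hI, hRHS] at this
    simp only [RCLike.re_eq_complex_re, hre, Complex.ofReal_re] at this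
    exact this
  have hs : (0:ℝ) < Real.sqrt (2*π*σ^2) :=
    Real.sqrt_pos.mpr (by positivity)
  have hcong : ∀ y : ℝ, gaussianPDFReal 0 ⟨σ ^ 2, sq_nonneg σ⟩ y * Real.cos (2*y)
      = (Real.sqrt (2*π*σ^2))⁻¹ * (Real.exp (-(1/(2*σ^2))*y^2) * Real.cos (2*y)) := by
    intro y
    show (√(2 * π * σ^2))⁻¹ * Real.exp (-(y - 0) ^ 2 / (2 * σ^2)) * Real.cos (2*y) = _
    rw [sub_zero]
    rw [show -y^2/(2*σ^2) = -(1/(2*σ^2))*y^2 by ring]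
    ring
  simp_rw [hcong]
  rw [integral_const_mul, hL]
  field_simp

lemma taylor_bound (g : ℝ → ℝ) (hg : ContDiff ℝ 2 g) (hg0 : g 0 = 0) :
    ∃ C, 0 ≤ C ∧ ∀ x : ℝ, |x| ≤ 1 → |g x - deriv g 0 * x| ≤ C * x^2 := by
  have hg1 : Differentiable ℝ g := hg.differentiable (by norm_num)
  have hg' : ContDiff ℝ 1 (deriv g) :=
    (contDiff_succ_iff_deriv.mp (show ContDiff ℝ (1 + 1) g by exact_mod_cast hg)).2.2
  have hg'd : Differentiable ℝ (deriv g) := hg'.differentiable one_ne_zero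
  have hcont : ContinuousOn (deriv (deriv g)) (Set.Icc (-1:ℝ) 1) :=
    (hg'.continuous_deriv le_rfl).continuousOn
  obtain ⟨C, hC⟩ := (isCompact_Icc (a := (-1:ℝ)) (b := 1)).exists_bound_of_continuousOn hcont
  have hC0 : 0 ≤ C := le_trans (norm_nonneg _) (hC 0 (by norm_num))
  refine ⟨C, hC0, fun x hx => ?_⟩
  have step1 : ∀ t : ℝ, |t| ≤ 1 → |deriv g t - deriv g 0| ≤ C * |t| := by
    intro t ht
    have := (convex_Icc (-1:ℝ) 1).norm_image_sub_le_of_norm_deriv_le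
      (fun u _ => hg'd u) hC (by norm_num : (0:ℝ) ∈ Set.Icc (-1:ℝ) 1)
      (Set.mem_Icc.mpr (abs_le.mp ht))
    simpa [Real.norm_eq_abs] using this
  set h : ℝ → ℝ := fun u => g u - deriv g 0 * u with hh
  have hhd : ∀ u, HasDerivAt h (deriv g u - deriv g 0) u := by
    intro u
    exact (((hg1 u).hasDerivAt).sub ((hasDerivAt_id u).const_mul (deriv g 0))).congr_deriv (by simp)
  have hd2 : ∀ u, deriv h u = deriv g u - deriv g 0 := fun u => (hhd u).deriv
  have key := (convex_Icc (-|x|) (|x|)).norm_image_sub_le_of_norm_deriv_le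
    (f := h) (C := C * |x|)
    (fun u _ => (hhd u).differentiableAt)
    (fun u hu => by
      rw [Real.norm_eq_abs, hd2]
      calc |deriv g u - deriv g 0| ≤ C * |u| := step1 u (by
            rw [Set.mem_Icc] at hu
            rw [abs_le]; constructor <;> [linarith [neg_abs_le x]; linarith [le_abs_self x]]
            )
        _ ≤ C * |x| := by
            apply mul_le_mul_of_nonneg_left _ hC0
            rw [Set.mem_Icc] at hu
            rw [abs_le]; exact hu)
    (show (0:ℝ) ∈ Set.Icc (-|x|) (|x|) from
      Set.mem_Icc.mpr ⟨by linarith [abs_nonneg x], abs_nonneg x⟩)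
    (show x ∈ Set.Icc (-|x|) (|x|) from
      Set.mem_Icc.mpr ⟨neg_abs_le x, le_abs_self x⟩)
  have h0 : h 0 = 0 := by simp [hh, hg0]
  rw [h0] at key
  simp only [Real.norm_eq_abs, sub_zero] at key
  calc |g x - deriv g 0 * x| = |h x| := rfl
    _ ≤ C * |x| * |x| := key
    _ = C * x^2 := by rw [mul_assoc, abs_mul_abs_self]; ring

lemma integrable_of_bdd {μ : Measure ℝ} [IsFiniteMeasure μ] {f : ℝ → ℝ}
    (hf : Continuous f) {C : ℝ} (hC : ∀ x, |f x| ≤ C) : Integrable f μ :=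
  Integrable.mono' (integrable_const C) hf.aestronglyMeasurable (ae_of_all _ hC)

lemma gauss_sin_sq (σ : ℝ) (hσ : 0 < σ)
    (hcos : ∫ y, Real.cos (2*y) ∂(gaussianReal 0 ⟨σ ^ 2, sq_nonneg σ⟩) = Real.exp (-2*σ^2)) :
    ∫ y, Real.sin y ^ 2 ∂(gaussianReal 0 ⟨σ ^ 2, sq_nonneg σ⟩)
      = (1 - Real.exp (-2*σ^2))/2 := by
  set μ := gaussianReal 0 (⟨σ ^ 2, sq_nonneg σ⟩ : NNReal) with hμ
  haveI : IsProbabilityMeasure μ := by rw [hμ]; exact instIsProbabilityMeasureGaussianReal 0 _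
  have h1 : ∀ y : ℝ, Real.sin y ^ 2 = 1/2 - Real.cos (2*y) * (1/2) := fun y => by
    rw [Real.sin_sq_eq_half_sub y]; ring
  simp_rw [h1]
  have hi1 : Integrable (fun _ : ℝ => (1:ℝ)/2) μ := integrable_const _
  have hi2 : Integrable (fun y : ℝ => Real.cos (2*y) * (1/2)) μ := by
    apply integrable_of_bdd (C := 1/2) (by continuity)
    intro x
    rw [abs_mul, abs_of_pos (by norm_num : (0:ℝ) < 1/2)]
    have := Real.abs_cos_le_one (2*x)
    nlinarith
  rw [integral_sub hi1 hi2, integral_mul_const, hcos, integral_const]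
  simp
  ring

lemma deriv_step (ς : ℝ → ℝ) (hς : ContDiff ℝ 3 ς) (σ : ℝ) (hσ : 0 < σ) (a : ℝ) :
    HasDerivAt (fun θ : ℝ => ∫ y, ς (θ + a * Real.sin y) * Real.sin y
        ∂(gaussianReal 0 ⟨σ ^ 2, sq_nonneg σ⟩))
      (∫ y, deriv ς (a * Real.sin y) * Real.sin y
        ∂(gaussianReal 0 ⟨σ ^ 2, sq_nonneg σ⟩)) 0 := by
  set μ := gaussianReal 0 (⟨σ ^ 2, sq_nonneg σ⟩ : NNReal) with hμ
  haveI : IsProbabilityMeasure μ := by rw [hμ]; exact instIsProbabilityMeasureGaussianReal 0 _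
  have hςc : Continuous ς := hς.continuous
  have hςd : Differentiable ℝ ς := hς.differentiable (by norm_num)
  have hς'c : Continuous (deriv ς) := hς.continuous_deriv (by norm_num)
  obtain ⟨C, hC⟩ := (isCompact_Icc (a := -(1+|a|)) (b := 1+|a|)).exists_bound_of_continuousOn
    hς'c.continuousOn
  obtain ⟨D, hD⟩ := (isCompact_Icc (a := -(1+|a|)) (b := 1+|a|)).exists_bound_of_continuousOn
    hςc.continuousOn
  have h0mem : (0:ℝ) ∈ Set.Icc (-(1+|a|)) (1+|a|) :=
    Set.mem_Icc.mpr ⟨by linarith [abs_nonneg a], by linarith [abs_nonneg a]⟩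
  have hC0 : 0 ≤ C := le_trans (norm_nonneg _) (hC 0 h0mem)
  have hD0 : 0 ≤ D := le_trans (norm_nonneg _) (hD 0 h0mem)
  have hmem : ∀ (x : ℝ), x ∈ Metric.ball (0:ℝ) 1 → ∀ y : ℝ,
      x + a * Real.sin y ∈ Set.Icc (-(1+|a|)) (1+|a|) := by
    intro x hx y
    rw [Metric.mem_ball, Real.dist_eq, sub_zero] at hx
    have h1 : |a * Real.sin y| ≤ |a| := by
      rw [abs_mul]
      calc |a| * |Real.sin y| ≤ |a| * 1 :=
        mul_le_mul_of_nonneg_left (Real.abs_sin_le_one y) (abs_nonneg a)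
      _ = |a| := mul_one _
    constructor
    · nlinarith [neg_abs_le (a * Real.sin y), neg_abs_le x, le_abs_self x]
    · nlinarith [le_abs_self (a * Real.sin y), le_abs_self x]
  have hFcont : ∀ x : ℝ, Continuous (fun y => ς (x + a * Real.sin y) * Real.sin y) := by
    intro x
    exact ((hςc.comp (by continuity)).mul Real.continuous_sin)
  have hF'cont : ∀ x : ℝ, Continuous (fun y => deriv ς (x + a * Real.sin y) * Real.sin y) := by
    intro x
    exact ((hς'c.comp (by continuity)).mul Real.continuous_sin)
  have key := hasDerivAt_integral_of_dominated_loc_of_deriv_le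
    (F := fun (θ : ℝ) (y : ℝ) => ς (θ + a * Real.sin y) * Real.sin y)
    (F' := fun (θ : ℝ) (y : ℝ) => deriv ς (θ + a * Real.sin y) * Real.sin y)
    (x₀ := (0:ℝ)) (μ := μ) (bound := fun _ => C) (s := Metric.ball 0 1) (Metric.ball_mem_nhds 0 one_pos)
    ?_ ?_ ?_ ?_ ?_ ?_
  · have := key.2
    simpa using this
  · filter_upwards with x
    exact (hFcont x).aestronglyMeasurable
  · apply integrable_of_bdd (μ := μ) (hFcont 0) (C := D)
    intro y
    rw [abs_mul]
    calc |ς (0 + a * Real.sin y)| * |Real.sin y|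
        ≤ D * 1 := mul_le_mul (hD _ (hmem 0 (Metric.mem_ball_self one_pos) y))
          (Real.abs_sin_le_one y) (abs_nonneg _) hD0
      _ = D := mul_one _
  · exact (hF'cont 0).aestronglyMeasurable
  · filter_upwards with y
    intro x hx
    rw [Real.norm_eq_abs, abs_mul]
    calc |deriv ς (x + a * Real.sin y)| * |Real.sin y|
        ≤ C * 1 := mul_le_mul (hC _ (hmem x hx y)) (Real.abs_sin_le_one y)
          (abs_nonneg _) hC0
      _ = C := mul_one _
  · exact integrable_const C
  · filter_upwards with y
    intro x hx
    have h1 : HasDerivAt (fun θ : ℝ => θ + a * Real.sin y) 1 x := by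
      simpa using (hasDerivAt_id x).add_const (a * Real.sin y)
    have h2 : HasDerivAt ς (deriv ς (x + a * Real.sin y)) (x + a * Real.sin y) :=
      (hςd _).hasDerivAt
    have := (h2.comp x h1).mul_const (Real.sin y)
    simpa using this

lemma quant (ς : ℝ → ℝ) (hς : ContDiff ℝ 3 ς) (hς1 : deriv ς 0 = 0)
    (σ : ℝ) (hσ : 0 < σ) :
    ∃ C : ℝ, 0 ≤ C ∧ ∀ a : ℝ, |a| ≤ 1 →
      |(∫ y, deriv ς (a * Real.sin y) * Real.sin y ∂(gaussianReal 0 ⟨σ ^ 2, sq_nonneg σ⟩))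
        - a * iteratedDeriv 2 ς 0 * (1 - Real.exp (-2 * σ ^ 2)) / 2| ≤ C * a ^ 2 := by
  set μ := gaussianReal 0 (⟨σ ^ 2, sq_nonneg σ⟩ : NNReal) with hμ
  haveI : IsProbabilityMeasure μ := by rw [hμ]; exact instIsProbabilityMeasureGaussianReal 0 _
  set g : ℝ → ℝ := deriv ς with hgdef
  have hg : ContDiff ℝ 2 g :=
    (contDiff_succ_iff_deriv.mp (show ContDiff ℝ (2 + 1) ς by exact_mod_cast hς)).2.2
  have hgc : Continuous g := hg.continuous
  have hD2 : deriv g 0 = iteratedDeriv 2 ς 0 := by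
    rw [iteratedDeriv_succ, iteratedDeriv_one]
  obtain ⟨C, hC0, hC⟩ := taylor_bound g hg hς1
  obtain ⟨D, hD⟩ := (isCompact_Icc (a := (-1:ℝ)) (b := 1)).exists_bound_of_continuousOn
    hgc.continuousOn
  have hsin2 := gauss_sin_sq σ hσ (gauss_cos σ hσ)
  refine ⟨C, hC0, fun a ha => ?_⟩
  have hsy : ∀ y : ℝ, |a * Real.sin y| ≤ 1 := by
    intro y
    rw [abs_mul]
    calc |a| * |Real.sin y| ≤ 1 * 1 :=
      mul_le_mul ha (Real.abs_sin_le_one y) (abs_nonneg _) zero_le_one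
    _ = 1 := mul_one _
  have I1 : Integrable (fun y => g (a * Real.sin y) * Real.sin y) μ := by
    apply integrable_of_bdd (C := D) ((hgc.comp (by continuity)).mul Real.continuous_sin)
    intro y
    rw [Pi.mul_apply, Function.comp_apply, abs_mul]
    have hDy := hD (a * Real.sin y) (Set.mem_Icc.mpr (abs_le.mp (hsy y)))
    have hD0 : 0 ≤ D := le_trans (norm_nonneg _) (hD 0 (by norm_num))
    calc |g (a * Real.sin y)| * |Real.sin y|
        ≤ D * 1 := mul_le_mul hDy (Real.abs_sin_le_one y) (abs_nonneg _) hD0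
      _ = D := mul_one _
  have I2 : Integrable (fun y => (deriv g 0 * a) * Real.sin y ^ 2) μ := by
    apply integrable_of_bdd (C := |deriv g 0 * a|) (by continuity)
    intro y
    rw [abs_mul]
    have : |Real.sin y ^ 2| ≤ 1 := by
      rw [abs_of_nonneg (sq_nonneg _), sq]
      nlinarith [Real.abs_sin_le_one y, abs_nonneg (Real.sin y), le_abs_self (Real.sin y),
        neg_abs_le (Real.sin y)]
    nlinarith [abs_nonneg (deriv g 0 * a)]
  have hval : a * iteratedDeriv 2 ς 0 * (1 - Real.exp (-2 * σ ^ 2)) / 2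
      = ∫ y, (deriv g 0 * a) * Real.sin y ^ 2 ∂μ := by
    rw [integral_const_mul, hsin2, hD2]
    ring
  rw [hval, ← integral_sub I1 I2]
  have hbound : ∀ y : ℝ, ‖g (a * Real.sin y) * Real.sin y - (deriv g 0 * a) * Real.sin y ^ 2‖
      ≤ C * a ^ 2 := by
    intro y
    have h1 : g (a * Real.sin y) * Real.sin y - (deriv g 0 * a) * Real.sin y ^ 2
        = (g (a * Real.sin y) - deriv g 0 * (a * Real.sin y)) * Real.sin y := by ring
    rw [h1, Real.norm_eq_abs, abs_mul]
    have h2 := hC (a * Real.sin y) (hsy y)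
    have hs2 : (a * Real.sin y) ^ 2 ≤ a ^ 2 := by
      rw [mul_pow]
      nlinarith [Real.sin_sq_le_one y, sq_nonneg a]
    have h3 : C * (a * Real.sin y) ^ 2 ≤ C * a ^ 2 :=
      mul_le_mul_of_nonneg_left hs2 hC0
    calc |g (a * Real.sin y) - deriv g 0 * (a * Real.sin y)| * |Real.sin y|
        ≤ (C * (a * Real.sin y) ^ 2) * 1 := mul_le_mul h2 (Real.abs_sin_le_one y)
          (abs_nonneg _) (by positivity)
      _ = C * (a * Real.sin y) ^ 2 := mul_one _
      _ ≤ C * a ^ 2 := h3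
  have := norm_integral_le_of_norm_le (μ := μ) (integrable_const (C * a ^ 2))
    (ae_of_all _ hbound)
  rw [integral_const] at this
  simpa using this

theorem averaged_gradient_estimate
    (ς : ℝ → ℝ) (hς : ContDiff ℝ 3 ς) (hς0 : ς 0 = 0) (hς1 : deriv ς 0 = 0)
    (hς2 : iteratedDeriv 2 ς 0 < 0) (σ : ℝ) (hσ : 0 < σ) :
    (∀ a : ℝ, DifferentiableAt ℝ
      (fun θ : ℝ => ∫ y, ς (θ + a * Real.sin y) * Real.sin y
        ∂(gaussianReal 0 ⟨σ ^ 2, sq_nonneg σ⟩)) 0) ∧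
    (fun a : ℝ =>
        deriv (fun θ : ℝ => ∫ y, ς (θ + a * Real.sin y) * Real.sin y
          ∂(gaussianReal 0 ⟨σ ^ 2, sq_nonneg σ⟩)) 0
        - a * iteratedDeriv 2 ς 0 * (1 - Real.exp (-2 * σ ^ 2)) / 2)
      =O[nhds 0] (fun a : ℝ => a ^ 2) ∧
    (∃ a₀ : ℝ, 0 < a₀ ∧ ∀ a ∈ Set.Ioo 0 a₀,
      deriv (fun θ : ℝ => ∫ y, ς (θ + a * Real.sin y) * Real.sin y
        ∂(gaussianReal 0 ⟨σ ^ 2, sq_nonneg σ⟩)) 0 < 0) := by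
  have hderiv : ∀ a : ℝ, deriv (fun θ : ℝ => ∫ y, ς (θ + a * Real.sin y) * Real.sin y
      ∂(gaussianReal 0 ⟨σ ^ 2, sq_nonneg σ⟩)) 0
      = ∫ y, deriv ς (a * Real.sin y) * Real.sin y ∂(gaussianReal 0 ⟨σ ^ 2, sq_nonneg σ⟩) :=
    fun a => (deriv_step ς hς σ hσ a).deriv
  obtain ⟨C, hC0, hq⟩ := quant ς hς hς1 σ hσ
  have hsmall : ∀ᶠ a : ℝ in nhds 0, |a| ≤ 1 := by
    filter_upwards [Metric.ball_mem_nhds (0:ℝ) one_pos] with a ha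
    rw [Metric.mem_ball, Real.dist_eq, sub_zero] at ha
    exact ha.le
  refine ⟨fun a => (deriv_step ς hς σ hσ a).differentiableAt, ?_, ?_⟩
  · rw [isBigO_iff]
    refine ⟨C, ?_⟩
    filter_upwards [hsmall] with a ha
    rw [hderiv a, Real.norm_eq_abs, Real.norm_eq_abs, abs_of_nonneg (sq_nonneg a)]
    exact hq a ha
  · set E := Real.exp (-2 * σ ^ 2) with hE
    have hE1 : E < 1 := by
      rw [hE, Real.exp_lt_one_iff]
      nlinarith
    set D2 := iteratedDeriv 2 ς 0 with hD2
    set A := -D2 * (1 - E) / 2 with hA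
    have hApos : 0 < A := by
      rw [hA]
      have : 0 < -D2 := by linarith
      have : 0 < 1 - E := by linarith
      positivity
    refine ⟨min 1 (A / (C + 1)), lt_min one_pos (by positivity), fun a ha => ?_⟩
    obtain ⟨ha0, ha1⟩ := ha
    have ha2 : a < A / (C + 1) := lt_of_lt_of_le ha1 (min_le_right _ _)
    have ha3 : |a| ≤ 1 := by
      rw [abs_of_pos ha0]
      exact le_of_lt (lt_of_lt_of_le ha1 (min_le_left _ _))
    have hb := hq a ha3
    rw [← hderiv a] at hb
    have h4 : (C + 1) * a < A := by
      rw [div_eq_mul_inv] at ha2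
      have hc1 : (0:ℝ) < C + 1 := by linarith
      calc (C + 1) * a < (C + 1) * (A * (C+1)⁻¹) := by
            exact mul_lt_mul_of_pos_left ha2 hc1
        _ = A := by field_simp
    have h5 : deriv (fun θ : ℝ => ∫ y, ς (θ + a * Real.sin y) * Real.sin y
        ∂(gaussianReal 0 ⟨σ ^ 2, sq_nonneg σ⟩)) 0
        ≤ a * D2 * (1 - E) / 2 + C * a ^ 2 := by
      have := abs_le.mp hb
      linarith [this.2]
    have h6 : a * D2 * (1 - E) / 2 = -(A * a) := by rw [hA]; ring
    nlinarith [sq_nonneg a, mul_pos ha0 ha0]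
end

section
/- Let ς : ℝ → ℝ be C⁴ with ς(0)=0, ς'(0)=0, ς''(0) < 0, let σ > 0, v ~ N(0,σ²), and define G(θ, a) = E[ς(θ + a sin(v)) sin(v)]. Suppose θ(a) = b₁a + b₂a² + O(a³) solves G(θ(a), a) = 0 for small a. Then b₁ = 0 and b₂ = -ς'''(0)(3 - 4e^{-2σ²} + e^{-8σ²}) / (24 ς''(0)(1 - e^{-2σ²})). -/
open MeasureTheory ProbabilityTheory Filter Asymptotics Real Complex

lemma integral_gaussianReal_eq {v : NNReal} (hv : v ≠ 0) (f : ℝ → ℝ) :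
    ∫ y, f y ∂(gaussianReal 0 v) = ∫ y, gaussianPDFReal 0 v y * f y := by
  rw [gaussianReal_of_var_ne_zero _ hv]
  have : (gaussianPDF 0 v) = fun x => ((fun x => (gaussianPDFReal 0 v x).toNNReal) x : ENNReal) := rfl
  rw [this, integral_withDensity_eq_integral_smul
    ((measurable_gaussianPDFReal 0 v).real_toNNReal : Measurable fun x => (gaussianPDFReal 0 v x).toNNReal)]
  congr 1 with x
  simp [NNReal.smul_def, Real.coe_toNNReal _ (gaussianPDFReal_nonneg 0 v x)]

instance instGaussSq (σ : ℝ) : IsProbabilityMeasure (gaussianReal 0 ⟨σ ^ 2, sq_nonneg σ⟩) :=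
  instIsProbabilityMeasureGaussianReal _ _

lemma integral_cos_exp (b : ℝ) (hb : 0 < b) (k : ℝ) :
    ∫ x : ℝ, Real.exp (-b * x^2) * Real.cos (k * x)
      = Real.sqrt (π / b) * Real.exp (-(k^2) / (4*b)) := by
  have hbc : 0 < ((b:ℂ)).re := by simpa using hb
  have hfun : (fun x : ℝ => Complex.exp (Complex.I * k * x) * Complex.exp (-(b:ℂ) * x^2))
      = fun x : ℝ => Complex.exp (-(b:ℂ) * x^2 + (Complex.I * k) * x + 0) := by
    funext x; rw [← Complex.exp_add]; ring_nf
  have hint : Integrable (fun x : ℝ =>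
      Complex.exp (Complex.I * k * x) * Complex.exp (-(b:ℂ) * x^2)) := by
    rw [hfun]; exact integrable_cexp_quadratic hbc _ 0
  have h1 := fourierIntegral_gaussian hbc (k : ℂ)
  have h2 : ∫ x : ℝ, ((Complex.exp (Complex.I * k * x) * Complex.exp (-(b:ℂ) * x^2)).re)
      = ((∫ x : ℝ, Complex.exp (Complex.I * k * x) * Complex.exp (-(b:ℂ) * x^2))).re := by
    simpa using integral_re (𝕜 := ℂ) hint
  rw [h1] at h2
  have h3 : ∀ x : ℝ, (Complex.exp (Complex.I * k * x) * Complex.exp (-(b:ℂ) * x^2)).re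
      = Real.exp (-b * x^2) * Real.cos (k * x) := by
    intro x
    rw [← Complex.exp_add, Complex.exp_re]
    have hre : (Complex.I * k * x + -(b:ℂ) * x^2).re = -b * x^2 := by simp [← Complex.ofReal_pow]
    have him : (Complex.I * k * x + -(b:ℂ) * x^2).im = k * x := by simp [← Complex.ofReal_pow]
    rw [hre, him]
  simp_rw [h3] at h2
  have h4 : ((((π:ℂ)) / b) ^ (1/2 : ℂ) * Complex.exp (-(k:ℂ)^2 / (4*(b:ℂ)))).re
      = Real.sqrt (π / b) * Real.exp (-(k^2) / (4*b)) := by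
    have hπb : (0:ℝ) ≤ π / b := div_nonneg Real.pi_nonneg hb.le
    have e1 : ((π:ℂ)) / b = (((π / b : ℝ)) : ℂ) := by push_cast; ring
    have e2 : (-(k:ℂ)^2 / (4*(b:ℂ))) = (((-(k^2) / (4*b) : ℝ)) : ℂ) := by push_cast; ring
    rw [e1, e2, ← Complex.ofReal_exp, ← Complex.ofReal_ofNat,
      show (1 / (((2:ℝ)):ℂ)) = (((1/2 : ℝ)):ℂ) by norm_num,
      ← Complex.ofReal_cpow hπb, ← Complex.ofReal_mul, Complex.ofReal_re,
      Real.sqrt_eq_rpow]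
  rw [h4] at h2
  exact h2

lemma cos_gaussianReal (σ : ℝ) (hσ : 0 < σ) (k : ℝ) :
    ∫ y, Real.cos (k * y) ∂(gaussianReal 0 ⟨σ^2, sq_nonneg σ⟩)
      = Real.exp (-(k^2 * σ^2) / 2) := by
  have hσ2 : (0:ℝ) < σ^2 := by positivity
  have hv : (⟨σ^2, sq_nonneg σ⟩ : NNReal) ≠ 0 := by
    intro h
    have h' : σ^2 = 0 := congrArg Subtype.val h
    exact hσ2.ne' h'
  rw [integral_gaussianReal_eq hv]
  have hb : (0:ℝ) < (2*σ^2)⁻¹ := by positivity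
  have key : ∀ y : ℝ, gaussianPDFReal 0 (⟨σ^2, sq_nonneg σ⟩ : NNReal) y * Real.cos (k*y)
      = (Real.sqrt (2*π*σ^2))⁻¹ * (Real.exp (-(2*σ^2)⁻¹ * y^2) * Real.cos (k*y)) := by
    intro y
    unfold gaussianPDFReal
    change (√(2 * π * σ ^ 2))⁻¹ * Real.exp (-(y - 0) ^ 2 / (2 * σ ^ 2)) * Real.cos (k * y) = _
    rw [show -(y-0)^2/(2*σ^2) = -(2*σ^2)⁻¹*y^2 by field_simp; ring]
    ring
  simp_rw [key]
  rw [integral_const_mul, integral_cos_exp _ hb k,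
    show π/(2*σ^2)⁻¹ = 2*π*σ^2 by field_simp,
    show -(k^2)/(4*(2*σ^2)⁻¹) = -(k^2*σ^2)/2 by field_simp; ring,
    ← mul_assoc, inv_mul_cancel₀ (by positivity : Real.sqrt (2*π*σ^2) ≠ 0), one_mul]

lemma odd_gaussianReal {v : NNReal} (f : ℝ → ℝ) (hf : Measurable f)
    (hodd : ∀ x, f (-x) = - f x) :
    ∫ y, f y ∂(gaussianReal 0 v) = 0 := by
  have hmap : (gaussianReal 0 v).map ((-1 : ℝ) * ·) = gaussianReal 0 v := by
    rw [gaussianReal_map_const_mul (-1 : ℝ)]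
    congr 1
    · ring
    · ext
      norm_num
  have h1 : ∫ y, f y ∂(gaussianReal 0 v) = ∫ y, f ((-1) * y) ∂(gaussianReal 0 v) := by
    conv_lhs => rw [← hmap]
    rw [integral_map (by fun_prop) (by fun_prop)]
  have h2 : ∀ y : ℝ, f ((-1 : ℝ) * y) = - f y := by
    intro y; rw [show (-1 : ℝ) * y = -y by ring, hodd]
  simp_rw [h2, integral_neg] at h1
  linarith

lemma integrable_bdd {μ : Measure ℝ} [IsProbabilityMeasure μ] {f : ℝ → ℝ}
    (hf : Continuous f) {C : ℝ} (hC : ∀ x, |f x| ≤ C) : Integrable f μ :=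
  (integrable_const C).mono' hf.aestronglyMeasurable (ae_of_all _ fun x => by
    simpa using hC x)

lemma integrable_sin_pow {μ : Measure ℝ} [IsProbabilityMeasure μ] (n : ℕ) :
    Integrable (fun y => Real.sin y ^ n) μ :=
  integrable_bdd (by fun_prop) (C := 1) fun x => by
    rw [_root_.abs_pow]
    exact pow_le_one₀ (abs_nonneg _) (Real.abs_sin_le_one x)

lemma integrable_cos_mul {μ : Measure ℝ} [IsProbabilityMeasure μ] (k : ℝ) :
    Integrable (fun y => Real.cos (k * y)) μ :=
  integrable_bdd (by fun_prop) (C := 1) fun x => Real.abs_cos_le_one _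

lemma sin_sq_gaussianReal (σ : ℝ) (hσ : 0 < σ) :
    ∫ y, Real.sin y ^ 2 ∂(gaussianReal 0 ⟨σ ^ 2, sq_nonneg σ⟩)
      = 1/2 - Real.exp (-2 * σ^2) / 2 := by
  have hpt : ∀ y : ℝ, Real.sin y ^ 2 = 1/2 - (1/2) * Real.cos (2*y) := by
    intro y
    have h1 := Real.sin_sq y
    have h2 := Real.cos_sq y
    linarith
  simp_rw [hpt]
  rw [integral_sub (integrable_const _) ((integrable_cos_mul 2).const_mul (1/2)),
    integral_const_mul, cos_gaussianReal σ hσ 2, integral_const]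
  norm_num
  ring_nf

lemma sin_pow4_gaussianReal (σ : ℝ) (hσ : 0 < σ) :
    ∫ y, Real.sin y ^ 4 ∂(gaussianReal 0 ⟨σ ^ 2, sq_nonneg σ⟩)
      = 3/8 - Real.exp (-2 * σ^2) / 2 + Real.exp (-8 * σ^2) / 8 := by
  have hpt : ∀ y : ℝ, Real.sin y ^ 4
      = 3/8 - (1/2) * Real.cos (2*y) + (1/8) * Real.cos (4*y) := by
    intro y
    have h1 := Real.sin_sq y
    have h2 := Real.cos_sq y
    have h3 := Real.cos_sq (2*y)
    rw [show 2*(2*y) = 4*y by ring] at h3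
    nlinarith [h1, h2, h3]
  simp_rw [hpt]
  have hA : Integrable (fun y : ℝ => 3/8 - 1/2 * Real.cos (2*y))
      (gaussianReal 0 ⟨σ ^ 2, sq_nonneg σ⟩) :=
    (integrable_const _).sub ((integrable_cos_mul 2).const_mul (1/2))
  rw [integral_add hA ((integrable_cos_mul 4).const_mul (1/8)),
    integral_sub (integrable_const _) ((integrable_cos_mul 2).const_mul (1/2)),
    integral_const_mul, integral_const_mul, cos_gaussianReal σ hσ 2, cos_gaussianReal σ hσ 4,
    integral_const]
  norm_num
  ring_nf

lemma step_littleO (g g' : ℝ → ℝ) (hg : ∀ x, HasDerivAt g (g' x) x) (h0 : g 0 = 0)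
    (n : ℕ) (hd : g' =o[nhds 0] fun x => |x| ^ n) :
    g =o[nhds 0] fun x => |x| ^ (n+1) := by
  rw [isLittleO_iff] at hd ⊢
  intro c hc
  have hd' := hd hc
  rw [Metric.eventually_nhds_iff] at hd' ⊢
  obtain ⟨δ, hδ, hball⟩ := hd'
  refine ⟨δ, hδ, fun x hx => ?_⟩
  rw [Real.dist_eq, sub_zero] at hx
  have key : ‖g x - g 0‖ ≤ c * |x| ^ n * ‖x - 0‖ := by
    apply Convex.norm_image_sub_le_of_norm_hasDerivWithin_le
      (f' := g') (fun t _ => (hg t).hasDerivWithinAt) ?_ (convex_uIcc 0 x)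
      (Set.left_mem_uIcc) (Set.right_mem_uIcc)
    intro t ht
    have htx : |t| ≤ |x| := by
      rcases Set.mem_uIcc.mp ht with ⟨h1, h2⟩ | ⟨h1, h2⟩ <;> rw [abs_le] <;>
        constructor <;> nlinarith [le_abs_self x, neg_abs_le x]
    have h1 : ‖g' t‖ ≤ c * ‖|t| ^ n‖ := by
      apply hball
      rw [Real.dist_eq, sub_zero]
      exact lt_of_le_of_lt htx hx
    calc ‖g' t‖ ≤ c * ‖|t| ^ n‖ := h1
      _ = c * |t| ^ n := by rw [Real.norm_eq_abs, _root_.abs_pow, _root_.abs_abs]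
      _ ≤ c * |x| ^ n := by
          apply mul_le_mul_of_nonneg_left (pow_le_pow_left₀ (abs_nonneg t) htx n) hc.le
  rw [h0, sub_zero, sub_zero, Real.norm_eq_abs] at key
  calc ‖g x‖ = |g x| := rfl
    _ ≤ c * |x| ^ n * |x| := key
    _ = c * ‖|x| ^ (n+1)‖ := by
        rw [Real.norm_eq_abs, _root_.abs_pow, _root_.abs_abs, pow_succ]; ring

lemma taylor_peano (ς : ℝ → ℝ) (hς : ContDiff ℝ 4 ς) (h0 : ς 0 = 0)
    (h1 : deriv ς 0 = 0) :
    (fun x => ς x - (iteratedDeriv 2 ς 0 / 2 * x ^ 2 + iteratedDeriv 3 ς 0 / 6 * x ^ 3))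
      =o[nhds 0] fun x => |x| ^ 3 := by
  set c2 := iteratedDeriv 2 ς 0 / 2 with hc2
  set c3 := iteratedDeriv 3 ς 0 / 6 with hc3
  have h4 : ContDiff ℝ ((3 : ℕ) + 1) ς := by exact_mod_cast hς
  have hD1 : ContDiff ℝ 3 (deriv ς) := (contDiff_succ_iff_deriv.mp h4).2.2
  have hdiff0 : Differentiable ℝ ς := (contDiff_succ_iff_deriv.mp h4).1
  have hD1' : ContDiff ℝ ((2 : ℕ) + 1) (deriv ς) := by exact_mod_cast hD1
  have hD2 : ContDiff ℝ 2 (deriv (deriv ς)) := (contDiff_succ_iff_deriv.mp hD1').2.2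
  have hdiff1 : Differentiable ℝ (deriv ς) := (contDiff_succ_iff_deriv.mp hD1').1
  have hD2' : ContDiff ℝ ((1 : ℕ) + 1) (deriv (deriv ς)) := by exact_mod_cast hD2
  have hD3 : ContDiff ℝ 1 (deriv (deriv (deriv ς))) := (contDiff_succ_iff_deriv.mp hD2').2.2
  have hdiff2 : Differentiable ℝ (deriv (deriv ς)) := (contDiff_succ_iff_deriv.mp hD2').1
  have hD3c : Continuous (deriv (deriv (deriv ς))) := hD3.continuous
  have hi2 : iteratedDeriv 2 ς 0 = deriv (deriv ς) 0 := by
    rw [show (2 : ℕ) = 1 + 1 from rfl, iteratedDeriv_succ, iteratedDeriv_one]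
  have hi3 : iteratedDeriv 3 ς 0 = deriv (deriv (deriv ς)) 0 := by
    rw [show (3 : ℕ) = 1 + 1 + 1 from rfl, iteratedDeriv_succ, iteratedDeriv_succ,
      iteratedDeriv_one]
  -- level-3 function
  set g3 : ℝ → ℝ := fun x => deriv (deriv (deriv ς)) x - 6 * c3 with hg3
  set g2 : ℝ → ℝ := fun x => deriv (deriv ς) x - (2 * c2 + 6 * c3 * x) with hg2
  set g1 : ℝ → ℝ := fun x => deriv ς x - (2 * c2 * x + 3 * c3 * x ^ 2) with hg1
  set r : ℝ → ℝ := fun x => ς x - (c2 * x ^ 2 + c3 * x ^ 3) with hr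
  have hd2 : ∀ x, HasDerivAt g2 (g3 x) x := by
    intro x
    have h := ((hdiff2 x).hasDerivAt).sub
      (((hasDerivAt_id x).const_mul (6 * c3)).const_add (2 * c2))
    exact h.congr_deriv (by simp [hg3])
  have hd1 : ∀ x, HasDerivAt g1 (g2 x) x := by
    intro x
    have hq : HasDerivAt (fun y : ℝ => 2 * c2 * y + 3 * c3 * y ^ 2)
        (2 * c2 + 6 * c3 * x) x := by
      have h := ((hasDerivAt_id x).const_mul (2 * c2)).add
        ((hasDerivAt_pow 2 x).const_mul (3 * c3))
      exact h.congr_deriv (by push_cast; ring)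
    exact ((hdiff1 x).hasDerivAt).sub hq
  have hd0 : ∀ x, HasDerivAt r (g1 x) x := by
    intro x
    have hq : HasDerivAt (fun y : ℝ => c2 * y ^ 2 + c3 * y ^ 3)
        (2 * c2 * x + 3 * c3 * x ^ 2) x := by
      have h := ((hasDerivAt_pow 2 x).const_mul c2).add ((hasDerivAt_pow 3 x).const_mul c3)
      exact h.congr_deriv (by push_cast; ring)
    exact ((hdiff0 x).hasDerivAt).sub hq
  have hg3o : g3 =o[nhds 0] fun x : ℝ => |x| ^ 0 := by
    have hlim : Tendsto g3 (nhds 0) (nhds 0) := by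
      have : g3 0 = 0 := by simp [hg3, hc3, hi3]; ring
      have hc : Continuous g3 := by fun_prop
      simpa [this] using hc.tendsto 0
    simp only [pow_zero]
    exact (isLittleO_one_iff ℝ).mpr hlim
  have hg2o := step_littleO g2 g3 hd2 (by simp [hg2, hc2, hi2]; ring) 0 hg3o
  have hg1o := step_littleO g1 g2 hd1 (by simp [hg1, h1]) 1 hg2o
  have hro := step_littleO r g1 hd0 (by simp [hr, h0]) 2 hg1o
  exact hro

set_option maxHeartbeats 1000000 in
theorem average_equilibrium_expansion
    (ς : ℝ → ℝ) (hς : ContDiff ℝ 4 ς) (hς0 : ς 0 = 0) (hς1 : deriv ς 0 = 0)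
    (hς2 : iteratedDeriv 2 ς 0 < 0) (σ : ℝ) (hσ : 0 < σ)
    (G : ℝ → ℝ → ℝ)
    (hG : ∀ θ a : ℝ, G θ a =
      ∫ y, ς (θ + a * Real.sin y) * Real.sin y
        ∂(gaussianReal 0 ⟨σ ^ 2, sq_nonneg σ⟩))
    (θ : ℝ → ℝ) (b₁ b₂ : ℝ)
    (hθ : (fun a : ℝ => θ a - (b₁ * a + b₂ * a ^ 2)) =O[nhds 0] (fun a : ℝ => a ^ 3))
    (hroot : ∀ᶠ a in nhdsWithin 0 (Set.Ioi 0), G (θ a) a = 0) :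
    b₁ = 0 ∧
    b₂ = -(iteratedDeriv 3 ς 0 *
        (3 - 4 * Real.exp (-2 * σ ^ 2) + Real.exp (-8 * σ ^ 2))) /
      (24 * iteratedDeriv 2 ς 0 * (1 - Real.exp (-2 * σ ^ 2))) := by
  have hE2 : Real.exp (-2 * σ ^ 2) < 1 := by
    rw [Real.exp_lt_one_iff]
    nlinarith
  set c2 : ℝ := iteratedDeriv 2 ς 0 / 2 with hc2d
  set c3 : ℝ := iteratedDeriv 3 ς 0 / 6 with hc3d
  set m2 : ℝ := 1/2 - Real.exp (-2 * σ^2) / 2 with hm2d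
  set m4 : ℝ := 3/8 - Real.exp (-2 * σ^2) / 2 + Real.exp (-8 * σ^2) / 8 with hm4d
  have hm2pos : 0 < m2 := by rw [hm2d]; nlinarith
  have hc2ne : c2 ≠ 0 := by rw [hc2d]; intro h; nlinarith
  set r : ℝ → ℝ := fun x => ς x - (c2 * x^2 + c3 * x^3) with hrdef
  have hrcont : Continuous r := hς.continuous.sub (by fun_prop)
  have hro : r =o[nhds 0] fun x => |x|^3 := taylor_peano ς hς hς0 hς1
  -- moments
  have hs1 : ∫ y, Real.sin y ∂(gaussianReal 0 ⟨σ ^ 2, sq_nonneg σ⟩) = 0 :=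
    odd_gaussianReal _ (by fun_prop) (fun x => Real.sin_neg x)
  have hs3 : ∫ y, Real.sin y ^ 3 ∂(gaussianReal 0 ⟨σ ^ 2, sq_nonneg σ⟩) = 0 :=
    odd_gaussianReal _ (by fun_prop) (fun x => by rw [Real.sin_neg]; ring)
  have hs2 := sin_sq_gaussianReal σ hσ
  have hs4 := sin_pow4_gaussianReal σ hσ
  -- integrability of the remainder term
  have hint_r : ∀ θ₀ a : ℝ, Integrable
      (fun y => r (θ₀ + a * Real.sin y) * Real.sin y)
      (gaussianReal 0 ⟨σ ^ 2, sq_nonneg σ⟩) := by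
    intro θ₀ a
    obtain ⟨C, hC⟩ := (isCompact_Icc (a := θ₀ - |a|) (b := θ₀ + |a|)).exists_bound_of_continuousOn
      hrcont.continuousOn
    have harg : ∀ y : ℝ, θ₀ + a * Real.sin y ∈ Set.Icc (θ₀ - |a|) (θ₀ + |a|) := by
      intro y
      have h1 : |a * Real.sin y| ≤ |a| := by
        rw [abs_mul]
        exact mul_le_of_le_one_right (abs_nonneg a) (Real.abs_sin_le_one y)
      obtain ⟨h2, h3⟩ := abs_le.mp h1
      constructor <;> simp <;> linarith
    have hC0 : 0 ≤ C := le_trans (norm_nonneg _)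
      (hC θ₀ ⟨by linarith [abs_nonneg a], by linarith [abs_nonneg a]⟩)
    refine integrable_bdd (hrcont.comp (by fun_prop) |>.mul Real.continuous_sin) (C := C) ?_
    intro y
    rw [abs_mul]
    calc |r (θ₀ + a * Real.sin y)| * |Real.sin y| ≤ C * 1 := by
          apply mul_le_mul ?_ (Real.abs_sin_le_one y) (abs_nonneg _) hC0
          exact hC _ (harg y)
      _ = C := mul_one C
  -- exact expansion of G
  have hGid : ∀ θ₀ a : ℝ, G θ₀ a = (2*c2*θ₀*a + 3*c3*θ₀^2*a) * m2 + c3*a^3 * m4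
      + ∫ y, r (θ₀ + a * Real.sin y) * Real.sin y ∂(gaussianReal 0 ⟨σ ^ 2, sq_nonneg σ⟩) := by
    intro θ₀ a
    rw [hG θ₀ a]
    have hpt : ∀ y : ℝ, ς (θ₀ + a * Real.sin y) * Real.sin y =
        (c2*θ₀^2 + c3*θ₀^3) * Real.sin y + ((2*c2*θ₀*a + 3*c3*θ₀^2*a) * Real.sin y ^ 2
        + ((c2*a^2 + 3*c3*θ₀*a^2) * Real.sin y ^ 3 + (c3*a^3 * Real.sin y ^ 4
        + r (θ₀ + a * Real.sin y) * Real.sin y))) := by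
      intro y
      simp only [hrdef]
      ring
    simp_rw [hpt]
    have i1 : Integrable (fun y => (c2*θ₀^2 + c3*θ₀^3) * Real.sin y)
        (gaussianReal 0 ⟨σ ^ 2, sq_nonneg σ⟩) := by
      simpa using (integrable_sin_pow (μ := gaussianReal 0 ⟨σ ^ 2, sq_nonneg σ⟩) 1).const_mul
        (c2*θ₀^2 + c3*θ₀^3)
    have i2 : Integrable (fun y => (2*c2*θ₀*a + 3*c3*θ₀^2*a) * Real.sin y ^ 2)
        (gaussianReal 0 ⟨σ ^ 2, sq_nonneg σ⟩) := (integrable_sin_pow 2).const_mul _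
    have i3 : Integrable (fun y => (c2*a^2 + 3*c3*θ₀*a^2) * Real.sin y ^ 3)
        (gaussianReal 0 ⟨σ ^ 2, sq_nonneg σ⟩) := (integrable_sin_pow 3).const_mul _
    have i4 : Integrable (fun y => c3*a^3 * Real.sin y ^ 4)
        (gaussianReal 0 ⟨σ ^ 2, sq_nonneg σ⟩) := (integrable_sin_pow 4).const_mul _
    have i5 := hint_r θ₀ a
    have i45 : Integrable (fun y => c3*a^3 * Real.sin y ^ 4
        + r (θ₀ + a * Real.sin y) * Real.sin y)
        (gaussianReal 0 ⟨σ ^ 2, sq_nonneg σ⟩) := i4.add i5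
    have i345 : Integrable (fun y => (c2*a^2 + 3*c3*θ₀*a^2) * Real.sin y ^ 3
        + (c3*a^3 * Real.sin y ^ 4 + r (θ₀ + a * Real.sin y) * Real.sin y))
        (gaussianReal 0 ⟨σ ^ 2, sq_nonneg σ⟩) := i3.add i45
    have i2345 : Integrable (fun y => (2*c2*θ₀*a + 3*c3*θ₀^2*a) * Real.sin y ^ 2
        + ((c2*a^2 + 3*c3*θ₀*a^2) * Real.sin y ^ 3
        + (c3*a^3 * Real.sin y ^ 4 + r (θ₀ + a * Real.sin y) * Real.sin y)))
        (gaussianReal 0 ⟨σ ^ 2, sq_nonneg σ⟩) := i2.add i345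
    rw [integral_add i1 i2345, integral_add i2 i345, integral_add i3 i45,
      integral_add i4 i5, integral_const_mul, integral_const_mul, integral_const_mul,
      integral_const_mul, hs1, hs2, hs3, hs4]
    ring
  set l := nhdsWithin (0:ℝ) (Set.Ioi 0) with hl
  have hll : l ≤ nhds 0 := nhdsWithin_le_nhds
  -- powers little-o
  have hpow12 : (fun a : ℝ => a^2) =o[nhds 0] fun a => a := by
    simpa using isLittleO_pow_pow (𝕜 := ℝ) (show 1 < 2 by norm_num)
  have hpow13 : (fun a : ℝ => a^3) =o[nhds 0] fun a => a := by
    simpa using isLittleO_pow_pow (𝕜 := ℝ) (show 1 < 3 by norm_num)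
  have hpow23 : (fun a : ℝ => a^3) =o[nhds 0] fun a => a^2 :=
    isLittleO_pow_pow (show 2 < 3 by norm_num)
  -- θ is O(a)
  have hθO : (fun a => θ a) =O[nhds 0] fun a : ℝ => a := by
    have h1 : (fun a : ℝ => θ a - (b₁ * a + b₂ * a ^ 2)) =O[nhds 0] fun a => a :=
      hθ.trans hpow13.isBigO
    have h2 : (fun a : ℝ => b₁ * a + b₂ * a ^ 2) =O[nhds 0] fun a => a :=
      ((isBigO_refl (fun a : ℝ => a) (nhds 0)).const_mul_left b₁).add
        ((hpow12.isBigO).const_mul_left b₂)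
    simpa using h1.add h2
  obtain ⟨M, hM⟩ := hθO.bound
  set M1 : ℝ := |M| + 1 with hM1d
  have hM1pos : 0 < M1 := by positivity
  -- remainder term is o(a^3)
  have hR : (fun a => ∫ y, r (θ a + a * Real.sin y) * Real.sin y
      ∂(gaussianReal 0 ⟨σ ^ 2, sq_nonneg σ⟩)) =o[l] fun a => a^3 := by
    rw [isLittleO_iff]
    intro ε hε
    have hro' := isLittleO_iff.mp hro (show (0:ℝ) < ε / M1^3 by positivity)
    rw [Metric.eventually_nhds_iff] at hro'
    obtain ⟨δ, hδ, hball⟩ := hro'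
    have hsmall : ∀ᶠ a : ℝ in l, |a| < δ / M1 :=
      hll (Metric.eventually_nhds_iff.mpr ⟨δ / M1, by positivity,
        fun y hy => by rwa [Real.dist_eq, sub_zero] at hy⟩)
    filter_upwards [hM.filter_mono hll, hsmall] with a hMa hsa
    have hbd : ∀ y : ℝ, ‖r (θ a + a * Real.sin y) * Real.sin y‖ ≤ ε * |a|^3 := by
      intro y
      have harg : |θ a + a * Real.sin y| ≤ M1 * |a| := by
        have h1 : |a * Real.sin y| ≤ |a| := by
          rw [abs_mul]
          exact mul_le_of_le_one_right (abs_nonneg a) (Real.abs_sin_le_one y)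
        calc |θ a + a * Real.sin y| ≤ |θ a| + |a * Real.sin y| := abs_add_le _ _
          _ ≤ M * |a| + |a| := by
              refine add_le_add ?_ h1
              simpa [Real.norm_eq_abs] using hMa
          _ ≤ M1 * |a| := by
              rw [hM1d]
              nlinarith [le_abs_self M, abs_nonneg a]
      have hargδ : |θ a + a * Real.sin y| < δ := by
        calc |θ a + a * Real.sin y| ≤ M1 * |a| := harg
          _ < M1 * (δ / M1) := by exact mul_lt_mul_of_pos_left hsa hM1pos
          _ = δ := by field_simp
      have hrb : ‖r (θ a + a * Real.sin y)‖ ≤ (ε / M1^3) * |θ a + a * Real.sin y|^3 := by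
        have := hball (y := θ a + a * Real.sin y)
          (by rwa [Real.dist_eq, sub_zero])
        simpa [Real.norm_eq_abs, _root_.abs_pow, _root_.abs_abs] using this
      calc ‖r (θ a + a * Real.sin y) * Real.sin y‖
          = |r (θ a + a * Real.sin y)| * |Real.sin y| := by
            rw [Real.norm_eq_abs, abs_mul]
        _ ≤ ((ε / M1^3) * |θ a + a * Real.sin y|^3) * 1 := by
            refine mul_le_mul ?_ (Real.abs_sin_le_one y) (abs_nonneg _) (by positivity)
            simpa [Real.norm_eq_abs] using hrb
        _ = (ε / M1^3) * |θ a + a * Real.sin y|^3 := mul_one _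
        _ ≤ (ε / M1^3) * (M1 * |a|)^3 := by
            refine mul_le_mul_of_nonneg_left ?_ (by positivity)
            exact pow_le_pow_left₀ (abs_nonneg _) harg 3
        _ = ε * |a|^3 := by field_simp
    calc ‖∫ y, r (θ a + a * Real.sin y) * Real.sin y
          ∂(gaussianReal 0 ⟨σ ^ 2, sq_nonneg σ⟩)‖
        ≤ ε * |a|^3 * ((gaussianReal 0 ⟨σ ^ 2, sq_nonneg σ⟩) Set.univ).toReal :=
          norm_integral_le_of_norm_le_const (ae_of_all _ hbd)
      _ = ε * |a|^3 := by simp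
      _ = ε * ‖a^3‖ := by rw [Real.norm_eq_abs, _root_.abs_pow]
  -- identity for θ a
  have hmain : ∀ᶠ a in l, (2*c2*(θ a)*a + 3*c3*(θ a)^2*a) * m2 + c3*a^3 * m4
      + (∫ y, r (θ a + a * Real.sin y) * Real.sin y
        ∂(gaussianReal 0 ⟨σ ^ 2, sq_nonneg σ⟩)) = 0 := by
    filter_upwards [hroot] with a ha
    rw [← hGid (θ a) a]
    exact ha
  -- limits along l
  have hida : Tendsto (fun a : ℝ => a) l (nhds 0) := tendsto_id.mono_right hll
  have hθb1 : (fun a : ℝ => θ a - b₁ * a) =o[nhds 0] fun a => a := by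
    have h1 : (fun a : ℝ => θ a - (b₁*a + b₂*a^2)) =o[nhds 0] fun a => a :=
      hθ.trans_isLittleO hpow13
    have h2 : (fun a : ℝ => b₂*a^2) =o[nhds 0] fun a => a := hpow12.const_mul_left b₂
    exact (h1.add h2).congr_left fun a => by ring
  have hθ1 : Tendsto (fun a => θ a / a) l (nhds b₁) := by
    have h0 : Tendsto (fun a => (θ a - b₁*a)/a) l (nhds 0) :=
      (hθb1.mono hll).tendsto_div_nhds_zero
    have h1 : Tendsto (fun a => (θ a - b₁*a)/a + b₁) l (nhds (0 + b₁)) := h0.add_const b₁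
    rw [zero_add] at h1
    refine h1.congr' ?_
    filter_upwards [self_mem_nhdsWithin] with a ha
    have ha' : a ≠ 0 := ne_of_gt ha
    field_simp
    ring
  have hR2 : Tendsto (fun a => (∫ y, r (θ a + a * Real.sin y) * Real.sin y
      ∂(gaussianReal 0 ⟨σ ^ 2, sq_nonneg σ⟩)) / a^2) l (nhds 0) := by
    have hO : (fun a : ℝ => a^3) =O[l] fun a => a^2 := hpow23.isBigO.mono hll
    exact (hR.trans_isBigO hO).tendsto_div_nhds_zero
  have key1 : Tendsto (fun a => (2*c2*m2)*(θ a / a) + ((3*c3*m2)*((θ a / a)^2*a)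
      + ((c3*m4)*a + (∫ y, r (θ a + a * Real.sin y) * Real.sin y
        ∂(gaussianReal 0 ⟨σ ^ 2, sq_nonneg σ⟩)) / a^2))) l
      (nhds ((2*c2*m2)*b₁ + ((3*c3*m2)*(b₁^2*0) + ((c3*m4)*0 + 0)))) :=
    (hθ1.const_mul _).add ((((hθ1.pow 2).mul hida).const_mul _).add
      ((hida.const_mul _).add hR2))
  have hev1 : ∀ᶠ a in l, (2*c2*m2)*(θ a / a) + ((3*c3*m2)*((θ a / a)^2*a)
      + ((c3*m4)*a + (∫ y, r (θ a + a * Real.sin y) * Real.sin y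
        ∂(gaussianReal 0 ⟨σ ^ 2, sq_nonneg σ⟩)) / a^2)) = 0 := by
    filter_upwards [hmain, self_mem_nhdsWithin] with a hma ha
    have ha' : a ≠ 0 := ne_of_gt ha
    have hexpr : (2*c2*m2)*(θ a / a) + ((3*c3*m2)*((θ a / a)^2*a)
        + ((c3*m4)*a + (∫ y, r (θ a + a * Real.sin y) * Real.sin y
          ∂(gaussianReal 0 ⟨σ ^ 2, sq_nonneg σ⟩)) / a^2))
        = ((2*c2*(θ a)*a + 3*c3*(θ a)^2*a) * m2 + c3*a^3 * m4
          + (∫ y, r (θ a + a * Real.sin y) * Real.sin y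
            ∂(gaussianReal 0 ⟨σ ^ 2, sq_nonneg σ⟩))) / a^2 := by
      field_simp
      ring
    rw [hexpr, hma, zero_div]
  have hzero1 := tendsto_nhds_unique (key1.congr' hev1) tendsto_const_nhds
  simp only [mul_zero, add_zero] at hzero1
  have hb1 : b₁ = 0 := by
    have hne : (2*c2*m2) ≠ 0 :=
      mul_ne_zero (mul_ne_zero two_ne_zero hc2ne) hm2pos.ne'
    exact (mul_eq_zero.mp hzero1).resolve_left hne
  subst hb1
  refine ⟨rfl, ?_⟩
  -- second order
  have hθb2 : (fun a : ℝ => θ a - b₂ * a^2) =o[nhds 0] fun a => a^2 :=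
    (hθ.trans_isLittleO hpow23).congr_left fun a => by ring
  have hθ2 : Tendsto (fun a => θ a / a^2) l (nhds b₂) := by
    have h0 : Tendsto (fun a => (θ a - b₂*a^2)/a^2) l (nhds 0) :=
      (hθb2.mono hll).tendsto_div_nhds_zero
    have h1 : Tendsto (fun a => (θ a - b₂*a^2)/a^2 + b₂) l (nhds (0 + b₂)) := h0.add_const b₂
    rw [zero_add] at h1
    refine h1.congr' ?_
    filter_upwards [self_mem_nhdsWithin] with a ha
    have ha' : a ≠ 0 := ne_of_gt ha
    field_simp
    ring
  have hida2 : Tendsto (fun a : ℝ => a^2) l (nhds 0) := by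
    have h := hida.pow 2
    norm_num at h
    exact h
  have hR3 : Tendsto (fun a => (∫ y, r (θ a + a * Real.sin y) * Real.sin y
      ∂(gaussianReal 0 ⟨σ ^ 2, sq_nonneg σ⟩)) / a^3) l (nhds 0) :=
    hR.tendsto_div_nhds_zero
  have key2 : Tendsto (fun a => (2*c2*m2)*(θ a / a^2) + ((3*c3*m2)*((θ a / a^2)^2*a^2)
      + ((c3*m4) + (∫ y, r (θ a + a * Real.sin y) * Real.sin y
        ∂(gaussianReal 0 ⟨σ ^ 2, sq_nonneg σ⟩)) / a^3))) l
      (nhds ((2*c2*m2)*b₂ + ((3*c3*m2)*(b₂^2*0) + ((c3*m4) + 0)))) :=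
    (hθ2.const_mul _).add ((((hθ2.pow 2).mul hida2).const_mul _).add
      (tendsto_const_nhds.add hR3))
  have hev2 : ∀ᶠ a in l, (2*c2*m2)*(θ a / a^2) + ((3*c3*m2)*((θ a / a^2)^2*a^2)
      + ((c3*m4) + (∫ y, r (θ a + a * Real.sin y) * Real.sin y
        ∂(gaussianReal 0 ⟨σ ^ 2, sq_nonneg σ⟩)) / a^3)) = 0 := by
    filter_upwards [hmain, self_mem_nhdsWithin] with a hma ha
    have ha' : a ≠ 0 := ne_of_gt ha
    have hexpr : (2*c2*m2)*(θ a / a^2) + ((3*c3*m2)*((θ a / a^2)^2*a^2)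
        + ((c3*m4) + (∫ y, r (θ a + a * Real.sin y) * Real.sin y
          ∂(gaussianReal 0 ⟨σ ^ 2, sq_nonneg σ⟩)) / a^3))
        = ((2*c2*(θ a)*a + 3*c3*(θ a)^2*a) * m2 + c3*a^3 * m4
          + (∫ y, r (θ a + a * Real.sin y) * Real.sin y
            ∂(gaussianReal 0 ⟨σ ^ 2, sq_nonneg σ⟩))) / a^3 := by
      field_simp
      ring
    rw [hexpr, hma, zero_div]
  have hzero2 := tendsto_nhds_unique (key2.congr' hev2) tendsto_const_nhds
  simp only [mul_zero, add_zero, zero_add] at hzero2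
  -- hzero2 : (2*c2*m2)*b₂ + c3*m4 = 0
  rw [hc2d, hm2d, hc3d, hm4d] at hzero2
  have h1me : (0:ℝ) < 1 - Real.exp (-2 * σ ^ 2) := by linarith
  have hne : (24 * iteratedDeriv 2 ς 0 * (1 - Real.exp (-2 * σ ^ 2))) ≠ 0 :=
    mul_ne_zero (mul_ne_zero (by norm_num) (ne_of_lt hς2)) h1me.ne'
  rw [eq_div_iff hne]
  linear_combination 48 * hzero2
end
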